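/- Let p be a prime and let G be a finite semi-extraspecial p-group with |G : Z(G)| = p^{2a}. If σ is an automorphism of G of order p^{2a} − 1, then σ^{p^a − 1} induces an automorphism of the quotient group G/Z(G) (sending x·Z(G) to σ^{p^a −1}(x)·Z(G)) whose order is exactly p^a + 1. -/

import Mathlib

/-- A finite `p`-group `G` is extraspecial if `|Z(G)| = p` and `Z(G) = [G,G]`. -/
def IsExtraspecial (p : ℕ) (G : Type*) [Group G] : Prop :=
  Nat.card (Subgroup.center G) = p ∧ Subgroup.center G = commutator G

/-- A finite `p`-group `G` is semi-extraspecial if `G/N` is extraspecial for every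
maximal subgroup `N` of the center `Z(G)`. -/
def IsSemiExtraspecial (p : ℕ) (G : Type*) [Group G] : Prop :=
  ∀ (N : Subgroup G) [N.Normal], N ≤ Subgroup.center G →
    IsCoatom (N.subgroupOf (Subgroup.center G)) →
    IsExtraspecial p (G ⧸ N)

lemma center_le_commutator_of_ses (p : ℕ) (G : Type*) [Group G] [Finite G]
    (hses : IsSemiExtraspecial p G) : Subgroup.center G ≤ commutator G := by
  by_contra h
  set Z := Subgroup.center G with hZ
  have hW : (commutator G).subgroupOf Z ≠ ⊤ := by
    intro hW
    apply h
    intro z hz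
    have : (⟨z, hz⟩ : Z) ∈ (commutator G).subgroupOf Z := hW ▸ Subgroup.mem_top _
    exact this
  obtain hK | ⟨K, hK, hWK⟩ := eq_top_or_exists_le_coatom ((commutator G).subgroupOf Z)
  · exact hW hK
  set N : Subgroup G := K.map Z.subtype with hN
  have hNle : N ≤ Z := by
    rintro x ⟨y, hy, rfl⟩
    exact y.2
  have hNnormal : N.Normal := by
    constructor
    intro n hn g
    have hc := (Subgroup.mem_center_iff.mp (hNle hn)) g⁻¹
    have : g * n * g⁻¹ = n := by
      rw [mul_assoc, ← hc]; group
    rwa [this]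
  have hNK : N.subgroupOf Z = K :=
    Subgroup.comap_map_eq_self_of_injective Z.subtype_injective K
  have hext := hses N hNle (hNK ▸ hK)
  -- every z in Z lies in N, so K = ⊤, contradiction
  apply hK.1
  rw [← hNK]
  rw [eq_top_iff]
  rintro ⟨z, hz⟩ -
  show z ∈ N
  -- mk z is central in G/N
  have hcent : (QuotientGroup.mk z : G ⧸ N) ∈ Subgroup.center (G ⧸ N) := by
    rw [Subgroup.mem_center_iff]
    intro g
    induction g using QuotientGroup.induction_on with
    | H x =>
      show QuotientGroup.mk (x * z) = QuotientGroup.mk (z * x)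
      rw [Subgroup.mem_center_iff.mp hz x]
  rw [hext.2] at hcent
  have hcomm : commutator (G ⧸ N) = (commutator G).map (QuotientGroup.mk' N) := by
    rw [commutator_def, commutator_def, Subgroup.map_commutator,
      Subgroup.map_top_of_surjective _ (QuotientGroup.mk'_surjective N)]
  rw [hcomm] at hcent
  obtain ⟨c, hc, hcz⟩ := hcent
  have hcz' : c⁻¹ * z ∈ N := by
    rw [← QuotientGroup.eq]
    exact hcz
  have hcZ : c ∈ Z := by
    have : c = z * (c⁻¹ * z)⁻¹ := by group
    rw [this]
    exact Z.mul_mem hz (Z.inv_mem (hNle hcz'))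
  have : (⟨c, hcZ⟩ : Z) ∈ K := hWK hc
  have hcN : c ∈ N := ⟨⟨c, hcZ⟩, this, rfl⟩
  have : z = c * (c⁻¹ * z) := by group
  rw [this]
  exact N.mul_mem hcN hcz'

/-- Let `G` be a finite semi-extraspecial `p`-group with `|G : Z(G)| = p^(2a)`. If `σ` is
an automorphism of `G` of order `p^(2a) - 1`, then `σ^(p^a - 1)` induces an automorphism
of `G/Z(G)` whose order is exactly `p^a + 1`. -/
theorem stmt_13 (p a : ℕ) (hp : p.Prime) (G : Type*) [Group G] [Finite G]
    (hpG : IsPGroup p G) (hses : IsSemiExtraspecial p G)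
    (hindex : (Subgroup.center G).index = p ^ (2 * a))
    (σ : MulAut G) (hσ : orderOf σ = p ^ (2 * a) - 1)
    (σ' : MulAut (G ⧸ Subgroup.center G))
    (hσ' : ∀ x : G, σ' (QuotientGroup.mk x) = QuotientGroup.mk ((σ ^ (p ^ a - 1)) x)) :
    orderOf σ' = p ^ a + 1 := by
  have hfinAut : Finite (MulAut G) :=
    Finite.of_injective (fun f => (f : G → G)) DFunLike.coe_injective
  have hσpos : 0 < orderOf σ := orderOf_pos σ
  have ha : 1 ≤ a := by
    by_contra hh
    interval_cases a
    simp [hσ] at hσpos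
  set q := p ^ a with hq
  have hp2 : 2 ≤ p := hp.two_le
  have hq2 : 2 ≤ q := by
    have h1 : p ≤ p ^ a := Nat.le_self_pow (by omega) p
    omega
  have hqq : p ^ (2 * a) = q ^ 2 := by
    rw [hq, ← pow_mul, Nat.mul_comm]
  have hσq : orderOf σ = q ^ 2 - 1 := by rw [hσ, hqq]
  -- action of powers of σ' on cosets
  have key : ∀ (n : ℕ) (x : G),
      (σ' ^ n) (QuotientGroup.mk x) = QuotientGroup.mk ((σ ^ ((q - 1) * n)) x) := by
    intro n
    induction n with
    | zero => intro x; simp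
    | succ n ih =>
      intro x
      rw [pow_succ', MulAut.mul_apply, ih, hσ', ← MulAut.mul_apply, ← pow_add]
      congr 2
      ring_nf
  have h1 : σ' ^ (q + 1) = 1 := by
    ext g
    induction g using QuotientGroup.induction_on with
    | H x =>
      rw [key]
      have : (q - 1) * (q + 1) = q ^ 2 - 1 := by
        have h1 : 1 ≤ q := by omega
        have h2 : 1 ≤ q ^ 2 := Nat.one_le_pow 2 q (by omega)
        zify [h1, h2]
        ring_nf
      rw [this, ← hσq, pow_orderOf_eq_one]
      rfl
  have hd : orderOf σ' ∣ q + 1 := orderOf_dvd_of_pow_eq_one h1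
  set d := orderOf σ' with hdd
  set τ : MulAut G := σ ^ ((q - 1) * d) with hτdef
  have hτZ : ∀ x : G, x⁻¹ * τ x ∈ Subgroup.center G := by
    intro x
    have h2 : (σ' ^ d) (QuotientGroup.mk x) = QuotientGroup.mk x := by
      rw [pow_orderOf_eq_one]; rfl
    rw [key d x] at h2
    rw [← QuotientGroup.eq]
    exact h2.symm
  -- the homomorphism x ↦ x⁻¹ * τ x into the center
  set Z := Subgroup.center G with hZdef
  have hZcomm : ∀ z ∈ Z, ∀ g : G, g * z = z * g := by
    intro z hz g
    exact (Subgroup.mem_center_iff.mp hz g)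
  set F : G →* Z :=
    { toFun := fun x => ⟨x⁻¹ * τ x, hτZ x⟩
      map_one' := by ext; simp
      map_mul' := by
        intro x y
        ext
        show (x * y)⁻¹ * τ (x * y) = (x⁻¹ * τ x) * (y⁻¹ * τ y)
        rw [map_mul, mul_inv_rev]
        have hc := hZcomm _ (hτZ x) y⁻¹
        rw [show y⁻¹ * x⁻¹ * (τ x * τ y) = (y⁻¹ * (x⁻¹ * τ x)) * τ y by group, hc, mul_assoc] } with hFdef
  have hτx : ∀ x : G, τ x = x * (F x : G) := by
    intro x
    show τ x = x * (x⁻¹ * τ x)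
    group
  have hker : commutator G ≤ F.ker := by
    rw [commutator_def, Subgroup.commutator_le]
    intro g _ h _
    rw [MonoidHom.mem_ker, map_commutatorElement]
    exact commutatorElement_eq_one_iff_commute.mpr (Subtype.ext (hZcomm _ (F h).2 _))
  have hZle : Z ≤ commutator G := center_le_commutator_of_ses p G hses
  have hFF : ∀ x : G, F ((F x : G)) = 1 := fun x => hker (hZle (F x).2)
  have hτn : ∀ (n : ℕ) (x : G), (τ ^ n) x = x * ((F x : G)) ^ n := by
    intro n
    induction n with
    | zero => intro x; simp
    | succ n ih =>
      intro x
      rw [pow_succ, MulAut.mul_apply, hτx x, map_mul, ih, ih]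
      have h1 : ((F ((F x : G)) : G)) = 1 := by rw [hFF x]; rfl
      rw [h1]
      simp [pow_succ, mul_assoc]
  -- τ has p-power order, but also order coprime to p, hence τ = 1
  have hτ1 : τ = 1 := by
    have hτcard : τ ^ Nat.card G = 1 := by
      ext x
      rw [hτn (Nat.card G) x]
      have : ((F x : G)) ^ Nat.card G = 1 := pow_card_eq_one'
      rw [this, mul_one]
      rfl
    haveI : Fact p.Prime := ⟨hp⟩
    obtain ⟨s, hs⟩ := hpG.exists_card_eq
    have hdvd1 : orderOf τ ∣ p ^ s := by
      rw [← hs]; exact orderOf_dvd_of_pow_eq_one hτcard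
    have hdvd2 : orderOf τ ∣ q ^ 2 - 1 := hσq ▸ orderOf_pow_dvd _
    have hcop : Nat.Coprime (p ^ s) (q ^ 2 - 1) := by
      apply Nat.Coprime.pow_left
      rw [hp.coprime_iff_not_dvd]
      intro hpd
      have hpq : p ∣ q ^ 2 := dvd_pow (dvd_pow_self p (by omega)) (by omega)
      have : p ∣ 1 := by
        have h1 : 1 ≤ q ^ 2 := Nat.one_le_pow 2 q (by omega)
        have := Nat.dvd_sub hpq hpd
        simpa [Nat.sub_sub_self h1] using this
      have := Nat.le_of_dvd one_pos this
      omega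
    have hg : orderOf τ ∣ Nat.gcd (p ^ s) (q ^ 2 - 1) := Nat.dvd_gcd hdvd1 hdvd2
    rw [hcop] at hg
    exact orderOf_eq_one_iff.mp (Nat.dvd_one.mp hg)
  -- conclude
  have hdvd : orderOf σ ∣ (q - 1) * d := orderOf_dvd_of_pow_eq_one hτ1
  rw [hσq] at hdvd
  have hfact : q ^ 2 - 1 = (q - 1) * (q + 1) := by
    have h1 : 1 ≤ q := by omega
    have h2 : 1 ≤ q ^ 2 := Nat.one_le_pow 2 q (by omega)
    zify [h1, h2]
    ring
  rw [hfact] at hdvd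
  have hq1 : 0 < q - 1 := by omega
  have hdvd' : q + 1 ∣ d := (Nat.mul_dvd_mul_iff_left hq1).mp hdvd
  exact Nat.dvd_antisymm hd hdvd'
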